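/- For an MDP with finite state and action spaces, any fixed β ∈ [0,1) and deterministic updates Q_{k+1} = T_β Q_k starting from bounded Q_0, the value sequence V_k(x) = max_a Q_k(x,a) satisfies V_{k+1}(x) − V_k(x) ≥ γ E_{x'∼P(·|x,π_k(x))}[V_k(x') − V_{k-1}(x')] for all k ≥ 1, where π_k(x) is any action achieving max_a Q_k(x,a). -/
import Mathlib


open Finset

/-- For a finite MDP with fixed β ∈ [0,1) and deterministic updates
`Q_{k+1} = T_β Q_k`, the values `V_k(x) = max_a Q_k(x,a)` satisfy, for all `k ≥ 1`,
`V_{k+1}(x) − V_k(x) ≥ γ E_{x'∼P(·|x,π_k(x))}[V_k(x') − V_{k-1}(x')]`,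
where `π_k(x)` is any action achieving `max_a Q_k(x,a)`. -/
theorem value_recursion_robust
    {X A : Type*} [Fintype X] [Fintype A] [Nonempty X] [Nonempty A]
    (R : X → A → ℝ) (P : X → A → X → ℝ)
    (hPnonneg : ∀ x a x', 0 ≤ P x a x') (hPsum : ∀ x a, ∑ x', P x a x' = 1)
    (γ : ℝ) (hγ0 : 0 ≤ γ) (hγ1 : γ < 1)
    (β : ℝ) (hβ0 : 0 ≤ β) (hβ1 : β < 1)
    (Q : ℕ → X → A → ℝ)
    (hiter : ∀ k x a, Q (k + 1) x a =
      (R x a + γ * ∑ x', P x a x' * (⨆ b, Q k x' b))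
        - β * ((⨆ b, Q k x b) - Q k x a))
    (π : ℕ → X → A) (hπ : ∀ k x, Q k x (π k x) = ⨆ a, Q k x a) :
    ∀ k, 1 ≤ k → ∀ x,
      (⨆ a, Q (k + 1) x a) - (⨆ a, Q k x a)
        ≥ γ * ∑ x', P x (π k x) x' * ((⨆ a, Q k x' a) - ⨆ a, Q (k - 1) x' a) := by
  intro k hk x
  obtain ⟨m, rfl⟩ : ∃ m, k = m + 1 := ⟨k - 1, by omega⟩
  simp only [Nat.add_sub_cancel]
  -- upper bound on sup at step k+2 side: V_{k+1} ≥ Q_{k+1}(x, π_k x)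
  have hbdd : ∀ (n : ℕ) (y : X), BddAbove (Set.range (Q n y)) := fun n y =>
    Set.Finite.bddAbove (Set.finite_range _)
  have h1 : Q (m + 1 + 1) x (π (m + 1) x) ≤ ⨆ a, Q (m + 1 + 1) x a :=
    le_ciSup (hbdd _ _) _
  have h2 : Q (m + 1 + 1) x (π (m + 1) x) =
      R x (π (m + 1) x) + γ * ∑ x', P x (π (m + 1) x) x' * (⨆ b, Q (m + 1) x' b) := by
    rw [hiter, hπ]; ring
  have h3 : (⨆ a, Q (m + 1) x a) ≤
      R x (π (m + 1) x) + γ * ∑ x', P x (π (m + 1) x) x' * (⨆ b, Q m x' b) := by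
    rw [← hπ (m + 1) x, hiter]
    have hle : Q m x (π (m + 1) x) ≤ ⨆ b, Q m x b := le_ciSup (hbdd _ _) _
    nlinarith [mul_nonneg hβ0 (sub_nonneg.mpr hle)]
  have hdist : ∑ x', P x (π (m + 1) x) x' * ((⨆ a, Q (m + 1) x' a) - ⨆ a, Q m x' a)
      = (∑ x', P x (π (m + 1) x) x' * (⨆ a, Q (m + 1) x' a))
        - ∑ x', P x (π (m + 1) x) x' * (⨆ a, Q m x' a) := by
    rw [← Finset.sum_sub_distrib]
    exact Finset.sum_congr rfl (fun y _ => by ring)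
  rw [ge_iff_le, hdist, mul_sub]
  nlinarith [h1, h2, h3]
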